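/- Let w ∈ S_n and let (j k) be a transposition with ℓ(w(j k)) = ℓ(w) + 1, where w(j k) denotes the product of w with (j k) on the right. Then p_{w(j k)}(w(j k)) = (t_{w(j)} − t_{w(k)}) · p_w(w(j k)); equivalently, the ratio p_w(w(j k))/p_{w(j k)}(w(j k)) equals 1/(t_{w(j)} − t_{w(k)}). -/

import Mathlib

open MvPolynomial Equiv Finset

noncomputable section

/-- The polynomial ring ℂ[t₁,…,tₙ]. -/
abbrev Pol (n : ℕ) : Type := MvPolynomial (Fin n) ℂ

/-- The action of a permutation `w` on polynomials by the substitution `tᵢ ↦ t_{w(i)}`. -/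
def pact {n : ℕ} (w : Perm (Fin n)) (f : Pol n) : Pol n := rename ⇑w f

/-- The GKM condition defining `R ⊆ ∏_{v ∈ Sₙ} ℂ[t₁,…,tₙ]`: for every `v` and every
transposition `(i j)` with `i < j`, the difference `p(v) − p((i j)v)` is divisible by
`tᵢ − tⱼ`. -/
def GKM (n : ℕ) (p : Perm (Fin n) → Pol n) : Prop :=
  ∀ (v : Perm (Fin n)) (i j : Fin n), i < j →
    (X i - X j : Pol n) ∣ (p v - p (Equiv.swap i j * v))

/-- The length of a permutation: its number of inversions. -/
def len {n : ℕ} (w : Perm (Fin n)) : ℕ :=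
  (Finset.univ.filter fun q : Fin n × Fin n => q.1 < q.2 ∧ w q.2 < w q.1).card

/-- Bruhat order: the partial order generated by `u < (i j) u` whenever `ℓ(u) < ℓ((i j)u)`. -/
def bruhatLE {n : ℕ} : Perm (Fin n) → Perm (Fin n) → Prop :=
  Relation.ReflTransGen
    (fun u v => (∃ i j : Fin n, i < j ∧ v = Equiv.swap i j * u) ∧ len u < len v)

/-- `p` is the canonical class (equivariant Schubert class) of `w`:
(i) each component is homogeneous of degree `ℓ(w)`; (ii) `p(v) = 0` unless `v ≥ w` in
Bruhat order; (iii) `p(w) = ∏ (tᵢ − tⱼ)` over pairs `i < j` with `ℓ((i j)w) < ℓ(w)`;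
and `p` satisfies the GKM conditions. -/
def IsCanonical {n : ℕ} (w : Perm (Fin n)) (p : Perm (Fin n) → Pol n) : Prop :=
  GKM n p ∧
  (∀ v, (p v).IsHomogeneous (len w)) ∧
  (∀ v, ¬ bruhatLE w v → p v = 0) ∧
  p w = ∏ q ∈ Finset.univ.filter
      (fun q : Fin n × Fin n => q.1 < q.2 ∧ len (Equiv.swap q.1 q.2 * w) < len w),
      (X q.1 - X q.2 : Pol n)

/-- The simple transposition `sᵢ = (i, i+1)`. -/
def sT (n i : ℕ) (h : i + 1 < n) : Perm (Fin n) :=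
  Equiv.swap ⟨i, Nat.lt_of_succ_lt h⟩ ⟨i + 1, h⟩

/-- The dot (left) action: `(w·p)(v) = w(p(w⁻¹ v))`. -/
def dot {n : ℕ} (w : Perm (Fin n)) (p : Perm (Fin n) → Pol n) : Perm (Fin n) → Pol n :=
  fun v => pact w (p (w⁻¹ * v))

/-- The star (right) action: `(p * w)(v) = p(vw)`. -/
def starAct {n : ℕ} (p : Perm (Fin n) → Pol n) (w : Perm (Fin n)) :
    Perm (Fin n) → Pol n :=
  fun v => p (v * w)

/-- `R` as a `ℂ[t₁,…,tₙ]`-submodule of the product. -/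
def gkmSubmodule (n : ℕ) : Submodule (Pol n) (Perm (Fin n) → Pol n) where
  carrier := {p | GKM n p}
  add_mem' := by
    intro a b ha hb v i j hij
    have h := dvd_add (ha v i j hij) (hb v i j hij)
    simpa [Pi.add_apply, add_sub_add_comm] using h
  zero_mem' := by
    intro v i j hij
    simp
  smul_mem' := by
    intro c p hp v i j hij
    have h := (hp v i j hij).mul_left c
    simpa [Pi.smul_apply, smul_eq_mul, mul_sub] using h

/-- The maximal ideal `𝔪 = (t₁,…,tₙ) ⊆ ℂ[t₁,…,tₙ]`. -/
def mIdeal (n : ℕ) : Ideal (Pol n) := Ideal.span (Set.range (X : Fin n → Pol n))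

/-- The submodule `𝔪R`: finite sums of products `c • p` with `c ∈ 𝔪` and `p ∈ R`. -/
def mR (n : ℕ) : Submodule (Pol n) (Perm (Fin n) → Pol n) :=
  Submodule.span (Pol n) {q | ∃ c ∈ mIdeal n, ∃ p, GKM n p ∧ q = c • p}

namespace LocRatioAux

variable {n : ℕ}

/-- The set of (position) inversions of a permutation. -/
def RIS (v : Perm (Fin n)) : Finset (Fin n × Fin n) :=
  Finset.univ.filter fun q : Fin n × Fin n => q.1 < q.2 ∧ v q.2 < v q.1

lemma len_eq (v : Perm (Fin n)) : len v = (RIS v).card := rfl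

lemma mem_RIS {v : Perm (Fin n)} {x : Fin n × Fin n} :
    x ∈ RIS v ↔ x.1 < x.2 ∧ v x.2 < v x.1 := by
  simp [RIS]

lemma len_inv (u : Perm (Fin n)) : len u⁻¹ = len u := by
  rw [len_eq, len_eq]
  exact Finset.card_nbij' (fun x => (u⁻¹ x.2, u⁻¹ x.1)) (fun x => (u x.2, u x.1))
    (fun x hx => by
      rw [Finset.mem_coe, mem_RIS] at hx ⊢
      simp only [Perm.coe_inv, Equiv.apply_symm_apply]
      exact ⟨hx.2, hx.1⟩)
    (fun x hx => by
      rw [Finset.mem_coe, mem_RIS] at hx ⊢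
      simp only [Perm.coe_inv, Equiv.symm_apply_apply]
      exact ⟨hx.2, hx.1⟩)
    (fun x _ => by simp) (fun x _ => by simp)

section Theta

variable (a b : Fin n)

/-- Whether a pair has a coordinate strictly between `a` and `b`. -/
def mid (x : Fin n × Fin n) : Prop := (a < x.1 ∧ x.1 < b) ∨ (a < x.2 ∧ x.2 < b)

instance : DecidablePred (mid a b) := fun x => by unfold mid; infer_instance

/-- The pairing used to compare inversions of `v` and `v * swap a b`. -/
def theta (x : Fin n × Fin n) : Fin n × Fin n :=
  if x = (a, b) ∨ mid a b x then x else (Equiv.swap a b x.1, Equiv.swap a b x.2)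

variable {a b}

lemma theta_pos {x : Fin n × Fin n} (h : x = (a, b) ∨ mid a b x) : theta a b x = x :=
  if_pos h

lemma theta_neg {x : Fin n × Fin n} (h : ¬(x = (a, b) ∨ mid a b x)) :
    theta a b x = (Equiv.swap a b x.1, Equiv.swap a b x.2) :=
  if_neg h

lemma sorted_else (hab : a < b) {x : Fin n × Fin n} (hx : x.1 < x.2)
    (h : ¬(x = (a, b) ∨ mid a b x)) : Equiv.swap a b x.1 < Equiv.swap a b x.2 := by
  obtain ⟨p, q⟩ := x
  push_neg at h
  obtain ⟨hne, hmid⟩ := h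
  simp only [mid, not_or, not_and] at hmid
  obtain ⟨hm1, hm2⟩ := hmid
  simp only at hx hm1 hm2 ⊢
  by_cases hpa : p = a
  · have hqb : q ≠ b := by
      intro h'; apply hne; rw [hpa, h']
    have hqa : q ≠ a := ne_of_gt (hpa ▸ hx)
    have hnlt : ¬ q < b := fun h' => hm2 (hpa ▸ hx) h'
    have hq : b < q := lt_of_le_of_ne (not_lt.mp hnlt) (Ne.symm hqb)
    rw [hpa, Equiv.swap_apply_left, Equiv.swap_apply_of_ne_of_ne hqa hqb]
    exact hq
  · by_cases hpb : p = b
    · have hq : b < q := hpb ▸ hx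
      have hqa : q ≠ a := ne_of_gt (lt_trans hab hq)
      have hqb : q ≠ b := ne_of_gt hq
      rw [hpb, Equiv.swap_apply_right, Equiv.swap_apply_of_ne_of_ne hqa hqb]
      exact lt_trans hab hq
    · rw [Equiv.swap_apply_of_ne_of_ne hpa hpb]
      by_cases hqa : q = a
      · rw [hqa, Equiv.swap_apply_left]
        exact lt_trans (hqa ▸ hx) hab
      · by_cases hqb : q = b
        · have hnlt : ¬ a < p := fun h' => hm1 h' (hqb ▸ hx)
          have hp : p < a := lt_of_le_of_ne (not_lt.mp hnlt) hpa
          rw [hqb, Equiv.swap_apply_right]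
          exact hp
        · rw [Equiv.swap_apply_of_ne_of_ne hqa hqb]
          exact hx

lemma mid_swap {x : Fin n × Fin n} (h : mid a b (Equiv.swap a b x.1, Equiv.swap a b x.2)) :
    mid a b x := by
  rcases h with ⟨h1, h2⟩ | ⟨h1, h2⟩
  · left
    have hne : Equiv.swap a b x.1 ≠ a := ne_of_gt h1
    have hne' : Equiv.swap a b x.1 ≠ b := ne_of_lt h2
    have : x.1 = Equiv.swap a b x.1 := by
      by_cases h1a : x.1 = a
      · exfalso; apply hne'; rw [h1a, Equiv.swap_apply_left]
      · by_cases h1b : x.1 = b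
        · exfalso; apply hne; rw [h1b, Equiv.swap_apply_right]
        · rw [Equiv.swap_apply_of_ne_of_ne h1a h1b]
    rw [this]; exact ⟨h1, h2⟩
  · right
    have hne : Equiv.swap a b x.2 ≠ a := ne_of_gt h1
    have hne' : Equiv.swap a b x.2 ≠ b := ne_of_lt h2
    have : x.2 = Equiv.swap a b x.2 := by
      by_cases h2a : x.2 = a
      · exfalso; apply hne'; rw [h2a, Equiv.swap_apply_left]
      · by_cases h2b : x.2 = b
        · exfalso; apply hne; rw [h2b, Equiv.swap_apply_right]
        · rw [Equiv.swap_apply_of_ne_of_ne h2a h2b]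
    rw [this]; exact ⟨h1, h2⟩

lemma theta_theta (hab : a < b) {x : Fin n × Fin n} (hx : x.1 < x.2) :
    theta a b (theta a b x) = x := by
  by_cases h : x = (a, b) ∨ mid a b x
  · rw [theta_pos h, theta_pos h]
  · rw [theta_neg h]
    have hcond : ¬((Equiv.swap a b x.1, Equiv.swap a b x.2) = (a, b) ∨
        mid a b (Equiv.swap a b x.1, Equiv.swap a b x.2)) := by
      rintro (heq | hmid)
      · have h1 : x.1 = b := by
          have := congrArg Prod.fst heq
          simp only at this
          have := congrArg (Equiv.swap a b) this
          rwa [Equiv.swap_apply_self, Equiv.swap_apply_left] at this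
        have h2 : x.2 = a := by
          have := congrArg Prod.snd heq
          simp only at this
          have := congrArg (Equiv.swap a b) this
          rwa [Equiv.swap_apply_self, Equiv.swap_apply_right] at this
        rw [h1, h2] at hx
        exact absurd (lt_trans hab hx) (lt_irrefl a)
      · exact h (Or.inr (mid_swap hmid))
    rw [theta_neg hcond]
    simp [Equiv.swap_apply_self]

lemma theta_sorted (hab : a < b) {x : Fin n × Fin n} (hx : x.1 < x.2) :
    (theta a b x).1 < (theta a b x).2 := by
  by_cases h : x = (a, b) ∨ mid a b x
  · rw [theta_pos h]; exact hx
  · rw [theta_neg h]; exact sorted_else hab hx h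

lemma theta_eq_pair (hab : a < b) {x : Fin n × Fin n} (hx : x.1 < x.2)
    (h : theta a b x = (a, b)) : x = (a, b) := by
  have := theta_theta hab hx
  rw [h] at this
  rw [← this, theta_pos (Or.inl rfl)]

lemma theta_mem_fwd {v : Perm (Fin n)} (hab : a < b) (hv : v a < v b)
    {x : Fin n × Fin n} (hx : x ∈ RIS v) : theta a b x ∈ RIS (v * Equiv.swap a b) := by
  rw [mem_RIS] at hx
  obtain ⟨hx12, hst⟩ := hx
  rw [mem_RIS]
  refine ⟨theta_sorted hab hx12, ?_⟩
  by_cases h : x = (a, b) ∨ mid a b x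
  · rw [theta_pos h]
    rcases h with heq | hmid
    · exfalso
      rw [heq] at hst
      exact absurd hv (not_lt.mpr (le_of_lt hst))
    · simp only [Perm.mul_apply]
      -- analyse whether endpoints of x are a or b
      by_cases h1a : x.1 = a
      · have h2b : x.2 ≠ b := by
          intro h2b
          rcases hmid with ⟨hm1, hm2⟩ | ⟨hm1, hm2⟩
          · rw [h1a] at hm1; exact absurd hm1 (lt_irrefl a)
          · rw [h2b] at hm2; exact absurd hm2 (lt_irrefl b)
        have h2a : x.2 ≠ a := ne_of_gt (h1a ▸ hx12)
        rw [h1a, Equiv.swap_apply_left, Equiv.swap_apply_of_ne_of_ne h2a h2b]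
        rw [h1a] at hst
        exact lt_trans hst hv
      · by_cases h2b : x.2 = b
        · have h1b : x.1 ≠ b := ne_of_lt (h2b ▸ hx12)
          rw [h2b, Equiv.swap_apply_right, Equiv.swap_apply_of_ne_of_ne h1a h1b]
          rw [h2b] at hst
          exact lt_trans hv hst
        · have h1b : x.1 ≠ b := by
            intro h1b
            rcases hmid with ⟨hm1, hm2⟩ | ⟨hm1, hm2⟩
            · rw [h1b] at hm2; exact absurd hm2 (lt_irrefl b)
            · have := lt_trans (h1b ▸ hx12) hm2; exact absurd this (lt_irrefl b)
          have h2a : x.2 ≠ a := by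
            intro h2a
            rcases hmid with ⟨hm1, hm2⟩ | ⟨hm1, hm2⟩
            · have := lt_trans hm1 (h2a ▸ hx12); exact absurd this (lt_irrefl a)
            · rw [h2a] at hm1; exact absurd hm1 (lt_irrefl a)
          rw [Equiv.swap_apply_of_ne_of_ne h1a h1b, Equiv.swap_apply_of_ne_of_ne h2a h2b]
          exact hst
  · rw [theta_neg h]
    simp only [Perm.mul_apply, Equiv.swap_apply_self]
    exact hst

lemma theta_mem_bwd {v : Perm (Fin n)} (hab : a < b)
    (hME : ∀ i, a < i → i < b → ¬(v a < v i ∧ v i < v b))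
    {x : Fin n × Fin n} (hx : x ∈ RIS (v * Equiv.swap a b)) (hxne : x ≠ (a, b)) :
    theta a b x ∈ RIS v := by
  rw [mem_RIS] at hx
  obtain ⟨hx12, hst⟩ := hx
  simp only [Perm.mul_apply] at hst
  rw [mem_RIS]
  refine ⟨theta_sorted hab hx12, ?_⟩
  by_cases h : x = (a, b) ∨ mid a b x
  · rcases h with heq | hmid
    · exact absurd heq hxne
    · rw [theta_pos (Or.inr hmid)]
      by_cases h1a : x.1 = a
      · have h2b : x.2 ≠ b := by
          intro h2b
          rcases hmid with ⟨hm1, hm2⟩ | ⟨hm1, hm2⟩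
          · rw [h1a] at hm1; exact absurd hm1 (lt_irrefl a)
          · rw [h2b] at hm2; exact absurd hm2 (lt_irrefl b)
        have h2a : x.2 ≠ a := ne_of_gt (h1a ▸ hx12)
        have hmid2 : a < x.2 ∧ x.2 < b := by
          rcases hmid with ⟨hm1, hm2⟩ | hm
          · rw [h1a] at hm1; exact absurd hm1 (lt_irrefl a)
          · exact hm
        rw [h1a, Equiv.swap_apply_left, Equiv.swap_apply_of_ne_of_ne h2a h2b] at hst
        -- hst : v x.2 < v b ; want v x.2 < v a
        have := hME x.2 hmid2.1 hmid2.2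
        rw [h1a]
        by_contra hcon
        push_neg at hcon
        have hne : v a ≠ v x.2 := fun hh => h2a (v.injective hh.symm)
        exact this ⟨lt_of_le_of_ne hcon hne, hst⟩
      · by_cases h2b : x.2 = b
        · have h1b : x.1 ≠ b := ne_of_lt (h2b ▸ hx12)
          have hmid1 : a < x.1 ∧ x.1 < b := by
            rcases hmid with hm | ⟨hm1, hm2⟩
            · exact hm
            · rw [h2b] at hm2; exact absurd hm2 (lt_irrefl b)
          rw [h2b, Equiv.swap_apply_right, Equiv.swap_apply_of_ne_of_ne h1a h1b] at hst
          -- hst : v a < v x.1 ; want v b < v x.1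
          have := hME x.1 hmid1.1 hmid1.2
          rw [h2b]
          by_contra hcon
          push_neg at hcon
          have hne : v x.1 ≠ v b := fun hh => h1b (v.injective hh)
          exact this ⟨hst, lt_of_le_of_ne hcon hne⟩
        · have h1b : x.1 ≠ b := by
            intro h1b
            rcases hmid with ⟨hm1, hm2⟩ | ⟨hm1, hm2⟩
            · rw [h1b] at hm2; exact absurd hm2 (lt_irrefl b)
            · have := lt_trans (h1b ▸ hx12) hm2; exact absurd this (lt_irrefl b)
          have h2a : x.2 ≠ a := by
            intro h2a
            rcases hmid with ⟨hm1, hm2⟩ | ⟨hm1, hm2⟩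
            · have := lt_trans hm1 (h2a ▸ hx12); exact absurd this (lt_irrefl a)
            · rw [h2a] at hm1; exact absurd hm1 (lt_irrefl a)
          rw [Equiv.swap_apply_of_ne_of_ne h1a h1b, Equiv.swap_apply_of_ne_of_ne h2a h2b] at hst
          exact hst
  · rw [theta_neg h]
    exact hst

end Theta

lemma pair_mem_RIS_mul {v : Perm (Fin n)} {a b : Fin n} (hab : a < b) (hv : v a < v b) :
    (a, b) ∈ RIS (v * Equiv.swap a b) := by
  rw [mem_RIS]
  refine ⟨hab, ?_⟩
  simp only [Perm.mul_apply, Equiv.swap_apply_left, Equiv.swap_apply_right]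
  exact hv

lemma pair_not_mem_RIS {v : Perm (Fin n)} {a b : Fin n} (hv : v a < v b) :
    (a, b) ∉ RIS v := by
  rw [mem_RIS]
  rintro ⟨-, h2⟩
  exact absurd hv (not_lt.mpr (le_of_lt h2))

lemma len_lt_mul_swap {v : Perm (Fin n)} {a b : Fin n} (hab : a < b) (hv : v a < v b) :
    len v < len (v * Equiv.swap a b) := by
  have hsub : len v + 1 ≤ len (v * Equiv.swap a b) := by
    rw [len_eq, len_eq, ← Finset.card_insert_of_notMem (pair_not_mem_RIS hv)]
    apply Finset.card_le_card_of_injOn (theta a b)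
    · intro x hx
      rcases Finset.mem_insert.mp hx with hx | hx
      · subst hx
        rw [theta_pos (Or.inl rfl)]
        exact pair_mem_RIS_mul hab hv
      · exact theta_mem_fwd hab hv hx
    · intro x hx y hy hxy
      have hx12 : x.1 < x.2 := by
        rcases Finset.mem_insert.mp hx with h | h
        · subst h; exact hab
        · exact (mem_RIS.mp h).1
      have hy12 : y.1 < y.2 := by
        rcases Finset.mem_insert.mp hy with h | h
        · subst h; exact hab
        · exact (mem_RIS.mp h).1
      calc x = theta a b (theta a b x) := (theta_theta hab hx12).symm
        _ = theta a b (theta a b y) := by rw [hxy]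
        _ = y := theta_theta hab hy12
  omega

lemma len_mul_swap_lt {v : Perm (Fin n)} {a b : Fin n} (hab : a < b) (hv : v b < v a) :
    len (v * Equiv.swap a b) < len v := by
  have key := len_lt_mul_swap (v := v * Equiv.swap a b) hab
    (by simp only [Perm.mul_apply, Equiv.swap_apply_left, Equiv.swap_apply_right]; exact hv)
  rwa [mul_assoc, Equiv.swap_mul_self, mul_one] at key

lemma len_add_three_le {v : Perm (Fin n)} {a b : Fin n} (hab : a < b) (hv : v a < v b)
    {i0 : Fin n} (h1 : a < i0) (h2 : i0 < b) (h3 : v a < v i0) (h4 : v i0 < v b) :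
    len v + 3 ≤ len (v * Equiv.swap a b) := by
  classical
  have hai0 : a ≠ i0 := ne_of_lt h1
  have hi0b : i0 ≠ b := ne_of_lt h2
  have hm1 : (i0, b) ∉ RIS v := pair_not_mem_RIS h4
  have hm2 : (a, i0) ∉ insert (i0, b) (RIS v) := by
    simp only [Finset.mem_insert, not_or]
    exact ⟨by simp [hai0, Prod.ext_iff], pair_not_mem_RIS h3⟩
  have hm3 : (a, b) ∉ insert (a, i0) (insert (i0, b) (RIS v)) := by
    simp only [Finset.mem_insert, not_or]
    refine ⟨by simp only [Prod.mk.injEq, not_and]; intro _ h; exact hi0b h.symm,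
      by simp only [Prod.mk.injEq, not_and]; intro h; exact absurd h hai0, pair_not_mem_RIS hv⟩
  have hcard : (insert (a, b) (insert (a, i0) (insert (i0, b) (RIS v)))).card = len v + 3 := by
    rw [Finset.card_insert_of_notMem hm3, Finset.card_insert_of_notMem hm2,
      Finset.card_insert_of_notMem hm1, ← len_eq]
  rw [len_eq (v * Equiv.swap a b), ← hcard]
  apply Finset.card_le_card_of_injOn (theta a b)
  · intro x hx
    have hmidai0 : mid a b (a, i0) := Or.inr ⟨h1, h2⟩
    have hmidi0b : mid a b (i0, b) := Or.inl ⟨h1, h2⟩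
    rcases Finset.mem_insert.mp hx with hx | hx
    · subst hx
      rw [theta_pos (Or.inl rfl)]
      exact pair_mem_RIS_mul hab hv
    rcases Finset.mem_insert.mp hx with hx | hx
    · subst hx
      rw [theta_pos (Or.inr hmidai0), Finset.mem_coe, mem_RIS]
      refine ⟨h1, ?_⟩
      simp only [Perm.mul_apply, Equiv.swap_apply_left,
        Equiv.swap_apply_of_ne_of_ne hai0.symm hi0b]
      exact h4
    rcases Finset.mem_insert.mp hx with hx | hx
    · subst hx
      rw [theta_pos (Or.inr hmidi0b), Finset.mem_coe, mem_RIS]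
      refine ⟨h2, ?_⟩
      simp only [Perm.mul_apply, Equiv.swap_apply_right,
        Equiv.swap_apply_of_ne_of_ne hai0.symm hi0b]
      exact h3
    · exact theta_mem_fwd hab hv hx
  · intro x hx y hy hxy
    have hsorted : ∀ z ∈ insert (a, b) (insert (a, i0) (insert (i0, b) (RIS v))),
        z.1 < z.2 := by
      intro z hz
      rcases Finset.mem_insert.mp hz with h | hz
      · subst h; exact hab
      rcases Finset.mem_insert.mp hz with h | hz
      · subst h; exact h1
      rcases Finset.mem_insert.mp hz with h | hz
      · subst h; exact h2
      · exact (mem_RIS.mp hz).1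
    calc x = theta a b (theta a b x) := (theta_theta hab (hsorted x hx)).symm
      _ = theta a b (theta a b y) := by rw [hxy]
      _ = y := theta_theta hab (hsorted y hy)

lemma len_swap_mul_lt_iff {a b : Fin n} (hab : a < b) (u : Perm (Fin n)) :
    len (Equiv.swap a b * u) < len u ↔ u⁻¹ b < u⁻¹ a := by
  have h1 : len (Equiv.swap a b * u) = len (u⁻¹ * Equiv.swap a b) := by
    rw [← len_inv (Equiv.swap a b * u), mul_inv_rev, Equiv.swap_inv]
  constructor
  · intro h
    by_contra h'
    have hne : u⁻¹ a ≠ u⁻¹ b := fun hh => (ne_of_lt hab) (u⁻¹.injective hh)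
    have h'' : u⁻¹ a < u⁻¹ b := lt_of_le_of_ne (not_lt.mp h') hne
    have := len_lt_mul_swap (v := u⁻¹) hab h''
    rw [← h1, len_inv] at this
    omega
  · intro h
    have := len_mul_swap_lt (v := u⁻¹) hab h
    rw [← h1, len_inv] at this
    exact this

lemma canonical_set (u : Perm (Fin n)) :
    (Finset.univ.filter fun q : Fin n × Fin n =>
        q.1 < q.2 ∧ len (Equiv.swap q.1 q.2 * u) < len u) = RIS u⁻¹ := by
  apply Finset.filter_congr
  intro x _
  exact and_congr_right fun h12 => len_swap_mul_lt_iff h12 u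

/-- f-weighted transfer between inversions of `v * swap a b` (minus the new pair) and of `v`. -/
lemma transfer {v : Perm (Fin n)} {a b : Fin n} (hab : a < b) (hv : v a < v b)
    (hME : ∀ i, a < i → i < b → ¬(v a < v i ∧ v i < v b))
    {M : Type*} [CommMonoid M] (f : Fin n × Fin n → M)
    (hf : ∀ x : Fin n × Fin n, f (Equiv.swap a b x.1, Equiv.swap a b x.2) = f x) :
    ∏ x ∈ (RIS (v * Equiv.swap a b)).erase (a, b), f x = ∏ x ∈ RIS v, f x := by
  classical
  refine Finset.prod_nbij' (theta a b) (theta a b) ?_ ?_ ?_ ?_ ?_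
  · intro x hx
    obtain ⟨hxne, hxmem⟩ := Finset.mem_erase.mp hx
    exact theta_mem_bwd hab hME hxmem hxne
  · intro x hx
    rw [Finset.mem_erase]
    have hx12 : x.1 < x.2 := (mem_RIS.mp hx).1
    constructor
    · intro h
      have := theta_eq_pair hab hx12 h
      subst this
      exact pair_not_mem_RIS hv hx
    · exact theta_mem_fwd hab hv hx
  · intro x hx
    exact theta_theta hab (mem_RIS.mp (Finset.mem_of_mem_erase hx)).1
  · intro x hx
    exact theta_theta hab (mem_RIS.mp hx).1
  · intro x hx
    by_cases h : x = (a, b) ∨ mid a b x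
    · rw [theta_pos h]
    · rw [theta_neg h]
      exact (hf x).symm

/-- A step-increasing reflexive-transitive closure respects length. -/
lemma bruhat_mono {u v : Perm (Fin n)}
    (h : Relation.ReflTransGen
      (fun u v => (∃ i j : Fin n, i < j ∧ v = Equiv.swap i j * u) ∧ len u < len v) u v) :
    u = v ∨ len u < len v := by
  induction h with
  | refl => exact Or.inl rfl
  | tail _ step ih =>
    right
    rcases ih with rfl | ih
    · exact step.2
    · exact lt_trans ih step.2

/-- Reindexing a product over inversions of `u⁻¹` (value pairs) by inversions of `u`
(position pairs), with a distinguished pair erased. -/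
lemma prod_RIS_inv_erase {M : Type*} [CommMonoid M] (u : Perm (Fin n))
    (g : Fin n × Fin n → M) (a b : Fin n) :
    ∏ x ∈ (RIS u⁻¹).erase (u b, u a), g x
      = ∏ x ∈ (RIS u).erase (a, b), g (u x.2, u x.1) := by
  classical
  refine Finset.prod_nbij' (fun x => (u⁻¹ x.2, u⁻¹ x.1)) (fun x => (u x.2, u x.1)) ?_ ?_ ?_ ?_ ?_
  · intro x hx
    obtain ⟨hxne, hxmem⟩ := Finset.mem_erase.mp hx
    rw [mem_RIS] at hxmem
    rw [Finset.mem_erase, mem_RIS]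
    refine ⟨?_, hxmem.2, by simp only [Perm.coe_inv, Equiv.apply_symm_apply]; exact hxmem.1⟩
    intro h
    apply hxne
    have h1 : u⁻¹ x.2 = a := congrArg Prod.fst h
    have h2 : u⁻¹ x.1 = b := congrArg Prod.snd h
    have : x = (x.1, x.2) := rfl
    rw [this, ← h1, ← h2]
    simp [Perm.coe_inv, Equiv.apply_symm_apply]
  · intro x hx
    obtain ⟨hxne, hxmem⟩ := Finset.mem_erase.mp hx
    rw [mem_RIS] at hxmem
    rw [Finset.mem_erase, mem_RIS]
    refine ⟨?_, hxmem.2, by simp only [Perm.coe_inv, Equiv.symm_apply_apply]; exact hxmem.1⟩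
    intro h
    apply hxne
    have h1 : u x.2 = u b := congrArg Prod.fst h
    have h2 : u x.1 = u a := congrArg Prod.snd h
    have : x = (x.1, x.2) := rfl
    rw [this, u.injective h1, u.injective h2]
  · intro x _; simp
  · intro x _; simp
  · intro x _
    simp [Perm.coe_inv, Equiv.apply_symm_apply]

/-- Reindexing without erasing. -/
lemma prod_RIS_inv {M : Type*} [CommMonoid M] (u : Perm (Fin n))
    (g : Fin n × Fin n → M) :
    ∏ x ∈ RIS u⁻¹, g x = ∏ x ∈ RIS u, g (u x.2, u x.1) := by
  classical
  refine Finset.prod_nbij' (fun x => (u⁻¹ x.2, u⁻¹ x.1)) (fun x => (u x.2, u x.1)) ?_ ?_ ?_ ?_ ?_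
  · intro x hx
    rw [mem_RIS] at hx
    rw [mem_RIS]
    exact ⟨hx.2, by simp only [Perm.coe_inv, Equiv.apply_symm_apply]; exact hx.1⟩
  · intro x hx
    rw [mem_RIS] at hx
    rw [mem_RIS]
    exact ⟨hx.2, by simp only [Perm.coe_inv, Equiv.symm_apply_apply]; exact hx.1⟩
  · intro x _; simp
  · intro x _; simp
  · intro x _; simp [Perm.coe_inv, Equiv.apply_symm_apply]

/-! ### Algebraic lemmas -/

/-- The collapsing map sending `b` to `a`. -/
def mcol (a b : Fin n) : Fin n → Fin n := fun x => if x = b then a else x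

lemma mcol_of_ne {a b x : Fin n} (h : x ≠ b) : mcol a b x = x := if_neg h

lemma mcol_b {a b : Fin n} : mcol a b b = a := if_pos rfl

lemma rename_mcol_lin {a b : Fin n} (hab : a ≠ b) :
    rename (mcol a b) (X a - X b : MvPolynomial (Fin n) ℂ) = 0 := by
  rw [map_sub, rename_X, rename_X, mcol_of_ne hab, mcol_b, sub_self]

lemma dvd_sub_rename (a b : Fin n) (f : MvPolynomial (Fin n) ℂ) :
    (X a - X b : MvPolynomial (Fin n) ℂ) ∣ f - rename (mcol a b) f := by
  induction f using MvPolynomial.induction_on with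
  | C c => simp
  | add p q hp hq =>
    have := dvd_add hp hq
    rwa [sub_add_sub_comm, ← map_add] at this
  | mul_X p i hp =>
    have key : (X a - X b : MvPolynomial (Fin n) ℂ) ∣ (X i - X (mcol a b i)) := by
      by_cases hib : i = b
      · rw [hib, mcol_b]
        rw [show (X b - X a : MvPolynomial (Fin n) ℂ) = -(X a - X b) by ring]
        exact dvd_neg.mpr dvd_rfl
      · rw [mcol_of_ne hib, sub_self]
        exact dvd_zero _
    have heq : p * X i - rename (mcol a b) (p * X i)
        = (p - rename (mcol a b) p) * X i
          + rename (mcol a b) p * (X i - X (mcol a b i)) := by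
      rw [map_mul, rename_X]; ring
    rw [heq]
    exact dvd_add (hp.mul_right _) (key.mul_left _)

lemma prime_lin {a b : Fin n} (hab : a ≠ b) :
    Prime (X a - X b : MvPolynomial (Fin n) ℂ) := by
  constructor
  · intro h0
    have : (X a : MvPolynomial (Fin n) ℂ) = X b := by
      have := sub_eq_zero.mp h0; exact this
    exact hab (MvPolynomial.X_injective this)
  constructor
  · intro hu
    have := hu.map (rename (mcol a b))
    rw [rename_mcol_lin hab] at this
    exact not_isUnit_zero this
  · intro f g hfg
    obtain ⟨t, ht⟩ := hfg
    have h0 : rename (mcol a b) f * rename (mcol a b) g = 0 := by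
      rw [← map_mul, ht, map_mul, rename_mcol_lin hab, zero_mul]
    rcases mul_eq_zero.mp h0 with h | h
    · left
      have := dvd_sub_rename a b f
      rwa [h, sub_zero] at this
    · right
      have := dvd_sub_rename a b g
      rwa [h, sub_zero] at this

lemma not_dvd_lin {a b c d : Fin n} (hab : a < b) (hcd : c < d) (hne : (a, b) ≠ (c, d)) :
    ¬ (X a - X b : MvPolynomial (Fin n) ℂ) ∣ (X c - X d) := by
  intro h
  obtain ⟨t, ht⟩ := h
  have h0 : rename (mcol a b) (X c - X d : MvPolynomial (Fin n) ℂ) = 0 := by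
    rw [ht, map_mul, rename_mcol_lin (ne_of_lt hab), zero_mul]
  rw [map_sub, rename_X, rename_X, sub_eq_zero] at h0
  have hmeq : mcol a b c = mcol a b d := MvPolynomial.X_injective h0
  by_cases hcb : c = b
  · by_cases hdb : d = b
    · exact (ne_of_lt hcd) (hcb.trans hdb.symm)
    · rw [hcb, mcol_b, mcol_of_ne hdb] at hmeq
      -- a = d, c = b : c < d means b < a
      rw [← hmeq, hcb] at hcd
      exact absurd (lt_trans hab hcd) (lt_irrefl a)
  · by_cases hdb : d = b
    · rw [mcol_of_ne hcb, hdb, mcol_b] at hmeq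
      exact hne (by rw [hmeq, hdb])
    · rw [mcol_of_ne hcb, mcol_of_ne hdb] at hmeq
      exact (ne_of_lt hcd) hmeq

lemma prod_primes_dvd {ι : Type*} [DecidableEq ι] (s : Finset ι)
    (f : ι → MvPolynomial (Fin n) ℂ) (z : MvPolynomial (Fin n) ℂ)
    (hpr : ∀ i ∈ s, Prime (f i))
    (hnd : ∀ i ∈ s, ∀ j ∈ s, i ≠ j → ¬ f i ∣ f j)
    (hz : ∀ i ∈ s, f i ∣ z) :
    (∏ i ∈ s, f i) ∣ z := by
  induction s using Finset.induction_on generalizing z with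
  | empty => simp
  | @insert a t hat ih =>
    obtain ⟨y, hy⟩ := hz a (Finset.mem_insert_self a t)
    have h2 : ∀ i ∈ t, f i ∣ y := by
      intro i hi
      have h3 : f i ∣ f a * y := hy ▸ hz i (Finset.mem_insert_of_mem hi)
      rcases (hpr i (Finset.mem_insert_of_mem hi)).2.2 _ _ h3 with h | h
      · exfalso
        exact hnd i (Finset.mem_insert_of_mem hi) a (Finset.mem_insert_self a t)
          (fun hh => hat (hh ▸ hi)) h
      · exact h
    have := ih y (fun i hi => hpr i (Finset.mem_insert_of_mem hi))
      (fun i hi j hj hij => hnd i (Finset.mem_insert_of_mem hi) j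
        (Finset.mem_insert_of_mem hj) hij) h2
    rw [Finset.prod_insert hat, hy]
    exact mul_dvd_mul_left (f a) this

lemma eq_C_of_mul_homog {m : ℕ} (P g : MvPolynomial (Fin n) ℂ)
    (hP : P.IsHomogeneous m) (hP0 : P ≠ 0)
    (h : (P * g).IsHomogeneous m) : g = C (coeff 0 g) := by
  have hcomp : ∀ d, 0 < d → homogeneousComponent d g = 0 := by
    intro d hd
    by_cases hdD : g.totalDegree < d
    · exact homogeneousComponent_eq_zero d g hdD
    push_neg at hdD
    have hsum : P * g = ∑ i ∈ Finset.range (g.totalDegree + 1),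
        P * homogeneousComponent i g := by
      rw [← Finset.mul_sum, sum_homogeneousComponent]
    have happ := congrArg (homogeneousComponent (m + d)) hsum
    rw [map_sum] at happ
    have hL : homogeneousComponent (m + d) (P * g) = 0 := by
      rw [homogeneousComponent_of_mem ((mem_homogeneousSubmodule _ _).mpr h)]
      rw [if_neg (show ¬ m + d = m by omega)]
    have hterm : ∀ i ∈ Finset.range (g.totalDegree + 1),
        homogeneousComponent (m + d) (P * homogeneousComponent i g)
          = if i = d then P * homogeneousComponent d g else 0 := by
      intro i _
      have hh : (P * homogeneousComponent i g).IsHomogeneous (m + i) :=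
        hP.mul (homogeneousComponent_isHomogeneous i g)
      rw [homogeneousComponent_of_mem ((mem_homogeneousSubmodule _ _).mpr hh)]
      by_cases hid : i = d
      · subst hid; simp
      · rw [if_neg (show ¬ m + d = m + i from fun hc => hid (Nat.add_left_cancel hc).symm),
          if_neg hid]
    rw [Finset.sum_congr rfl hterm, Finset.sum_ite_eq' _ d
      (fun i => P * homogeneousComponent d g)] at happ
    rw [if_pos (Finset.mem_range.mpr (by omega)), hL] at happ
    exact (mul_eq_zero.mp happ.symm).resolve_left hP0
  have hg := sum_homogeneousComponent g
  have hsingle : ∑ i ∈ Finset.range (g.totalDegree + 1), homogeneousComponent i g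
      = homogeneousComponent 0 g := by
    apply Finset.sum_eq_single_of_mem 0 (Finset.mem_range.mpr (by omega))
    intro i _ hi
    exact hcomp i (Nat.pos_of_ne_zero hi)
  conv_lhs => rw [← hg, hsingle, homogeneousComponent_zero]


lemma swap_eq_sorted {a b c d : Fin n} (hab : a < b) (hcd : c < d)
    (h : Equiv.swap a b = Equiv.swap c d) : a = c ∧ b = d := by
  have hc : Equiv.swap a b c = d := by rw [h, Equiv.swap_apply_left]
  by_cases hca : c = a
  · rw [hca, Equiv.swap_apply_left] at hc
    exact ⟨hca.symm, hc⟩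
  · by_cases hcb : c = b
    · rw [hcb, Equiv.swap_apply_right] at hc
      exfalso
      rw [hcb, ← hc] at hcd
      exact absurd (lt_trans hab hcd) (lt_irrefl a)
    · rw [Equiv.swap_apply_of_ne_of_ne hca hcb] at hc
      exact absurd hc (ne_of_lt hcd)

end LocRatioAux

open LocRatioAux

/-- if `ℓ(w(jk)) = ℓ(w) + 1` then
`p_{w(jk)}(w(jk)) = (t_{w(j)} − t_{w(k)}) · p_w(w(jk))`, i.e. the ratio
`p_w(w(jk)) / p_{w(jk)}(w(jk))` equals `1/(t_{w(j)} − t_{w(k)})`. -/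
theorem localization_ratio (n : ℕ) (hn : 1 ≤ n)
    (pw : Perm (Fin n) → Perm (Fin n) → Pol n)
    (hpw : ∀ w, IsCanonical w (pw w))
    (w : Perm (Fin n)) (j k : Fin n) (hjk : j < k)
    (hlen : len (w * Equiv.swap j k) = len w + 1) :
    pw (w * Equiv.swap j k) (w * Equiv.swap j k)
      = (X (w j) - X (w k) : Pol n) * pw w (w * Equiv.swap j k) := by
  classical
  set w' := w * Equiv.swap j k with hw'
  have hjkne : j ≠ k := ne_of_lt hjk
  have hwjk : w j < w k := by
    rcases lt_trichotomy (w j) (w k) with h | h | h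
    · exact h
    · exact absurd (w.injective h) hjkne
    · have hdec := len_mul_swap_lt hjk h
      rw [← hw'] at hdec
      omega
  have hME : ∀ i, j < i → i < k → ¬(w j < w i ∧ w i < w k) := by
    intro i h1 h2 hcon
    have h3 := len_add_three_le hjk hwjk h1 h2 hcon.1 hcon.2
    rw [← hw'] at h3
    omega
  have hw'inv : w'⁻¹ = Equiv.swap j k * w⁻¹ := by
    rw [hw', mul_inv_rev, Equiv.swap_inv]
  have hpairmem : (w j, w k) ∈ RIS w'⁻¹ := by
    rw [mem_RIS, hw'inv]
    refine ⟨hwjk, ?_⟩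
    simp only [Perm.mul_apply, Perm.coe_inv, Equiv.symm_apply_apply, Equiv.swap_apply_left,
      Equiv.swap_apply_right]
    exact hjk
  have hprod' : pw w' w' = ∏ x ∈ RIS w'⁻¹, (X x.1 - X x.2 : Pol n) := by
    rw [(hpw w').2.2.2, canonical_set]
  set P := ∏ x ∈ (RIS w'⁻¹).erase (w j, w k), (X x.1 - X x.2 : Pol n) with hP
  have hsplit : pw w' w' = (X (w j) - X (w k)) * P := by
    rw [hprod', ← Finset.mul_prod_erase _ _ hpairmem]
  have hswid : Equiv.swap (w j) (w k) * w' = w := by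
    rw [Equiv.swap_apply_apply, hw']
    simp [mul_assoc, Equiv.swap_mul_self]
  -- each linear factor of the erased set divides pw w w'
  have hstep5 : ∀ x ∈ (RIS w'⁻¹).erase (w j, w k), (X x.1 - X x.2 : Pol n) ∣ pw w w' := by
    intro x hx
    obtain ⟨hxne, hxmem⟩ := Finset.mem_erase.mp hx
    obtain ⟨hx12, hxst⟩ := mem_RIS.mp hxmem
    have hlt : len (Equiv.swap x.1 x.2 * w') < len w' :=
      (len_swap_mul_lt_iff hx12 w').mpr hxst
    have hnew : Equiv.swap x.1 x.2 * w' ≠ w := by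
      intro hcon
      apply hxne
      have h2 : Equiv.swap x.1 x.2 = w * w'⁻¹ := by
        rw [← hcon, mul_assoc]; simp
      have hsw : Equiv.swap x.1 x.2 = Equiv.swap (w j) (w k) := by
        rw [h2, hw'inv, ← mul_assoc, ← Equiv.swap_apply_apply]
      have := swap_eq_sorted hx12 hwjk hsw
      exact Prod.ext_iff.mpr ⟨this.1, this.2⟩
    have hz : pw w (Equiv.swap x.1 x.2 * w') = 0 := by
      apply (hpw w).2.2.1
      intro hb
      rcases bruhat_mono hb with heq | hlt2
      · exact hnew heq.symm
      · omega
    have hgkm := (hpw w).1 w' x.1 x.2 hx12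
    rwa [hz, sub_zero] at hgkm
  have hPdvd : P ∣ pw w w' := by
    rw [hP]
    apply LocRatioAux.prod_primes_dvd
    · intro x hx
      exact prime_lin (ne_of_lt (mem_RIS.mp (Finset.mem_of_mem_erase hx)).1)
    · intro x hx y hy hxy
      have hx12 := (mem_RIS.mp (Finset.mem_of_mem_erase hx)).1
      have hy12 := (mem_RIS.mp (Finset.mem_of_mem_erase hy)).1
      exact not_dvd_lin hx12 hy12 (by simpa using hxy)
    · exact hstep5
  obtain ⟨g, hg⟩ := hPdvd
  have hcard : ((RIS w'⁻¹).erase (w j, w k)).card = len w := by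
    rw [Finset.card_erase_of_mem hpairmem, ← len_eq, len_inv]
    omega
  have hPhom : P.IsHomogeneous (len w) := by
    rw [hP, ← hcard]
    have := MvPolynomial.IsHomogeneous.prod ((RIS w'⁻¹).erase (w j, w k))
      (fun x => (X x.1 - X x.2 : Pol n)) (fun _ => 1)
      (fun x _ => (isHomogeneous_X ℂ x.1).sub (isHomogeneous_X ℂ x.2))
    simpa using this
  have hphom : (pw w w').IsHomogeneous (len w) := (hpw w).2.1 w'
  have hmwσ : ∀ i, mcol (w j) (w k) (w (Equiv.swap j k i)) = mcol (w j) (w k) (w i) := by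
    intro i
    by_cases hij : i = j
    · rw [hij, Equiv.swap_apply_left, mcol_b, mcol_of_ne (ne_of_lt hwjk)]
    · by_cases hik : i = k
      · rw [hik, Equiv.swap_apply_right, mcol_b, mcol_of_ne (ne_of_lt hwjk)]
      · rw [Equiv.swap_apply_of_ne_of_ne hij hik]
  have hedge : rename (mcol (w j) (w k)) (pw w w')
      = rename (mcol (w j) (w k)) (pw w w) := by
    have hgkm := (hpw w).1 w' (w j) (w k) hwjk
    rw [hswid] at hgkm
    obtain ⟨t, ht⟩ := hgkm
    have hmap := congrArg (rename (mcol (w j) (w k))) ht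
    rw [map_sub, map_mul, rename_mcol_lin (ne_of_lt hwjk), zero_mul] at hmap
    exact sub_eq_zero.mp hmap
  have htrans : rename (mcol (w j) (w k)) (pw w w) = rename (mcol (w j) (w k)) P := by
    have hprodw : pw w w = ∏ x ∈ RIS w⁻¹, (X x.1 - X x.2 : Pol n) := by
      rw [(hpw w).2.2.2, canonical_set]
    have hL : rename (mcol (w j) (w k)) (pw w w)
        = ∏ x ∈ RIS w,
            ((X (mcol (w j) (w k) (w x.2)) - X (mcol (w j) (w k) (w x.1))) : Pol n) := by
      rw [hprodw, map_prod]
      simp only [map_sub, rename_X]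
      exact prod_RIS_inv w
        (fun x => (X (mcol (w j) (w k) x.1) - X (mcol (w j) (w k) x.2) : Pol n))
    have hR : rename (mcol (w j) (w k)) P
        = ∏ x ∈ (RIS w').erase (j, k),
            ((X (mcol (w j) (w k) (w' x.2)) - X (mcol (w j) (w k) (w' x.1))) : Pol n) := by
      rw [hP, map_prod]
      simp only [map_sub, rename_X]
      have hjk' : ((w' k : Fin n), (w' j : Fin n)) = (w j, w k) := by
        rw [hw']
        simp only [Perm.mul_apply, Equiv.swap_apply_left, Equiv.swap_apply_right]
      rw [← hjk']
      exact prod_RIS_inv_erase w'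
        (fun x => (X (mcol (w j) (w k) x.1) - X (mcol (w j) (w k) x.2) : Pol n)) j k
    rw [hL, hR]
    have htr := transfer hjk hwjk hME
      (fun x => ((X (mcol (w j) (w k) (w x.2)) - X (mcol (w j) (w k) (w x.1))) : Pol n))
      (fun x => by
        show (X (mcol (w j) (w k) (w (Equiv.swap j k x.2)))
            - X (mcol (w j) (w k) (w (Equiv.swap j k x.1))) : Pol n)
          = X (mcol (w j) (w k) (w x.2)) - X (mcol (w j) (w k) (w x.1))
        rw [hmwσ, hmwσ])
    rw [← hw'] at htr
    rw [← htr]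
    apply Finset.prod_congr rfl
    intro x hx
    rw [hw']
    simp only [Perm.mul_apply]
    rw [hmwσ, hmwσ]
  have hφP : rename (mcol (w j) (w k)) P ≠ 0 := by
    rw [hP, map_prod, Finset.prod_ne_zero_iff]
    intro x hx
    obtain ⟨hxne, hxmem⟩ := Finset.mem_erase.mp hx
    obtain ⟨hx12, -⟩ := mem_RIS.mp hxmem
    simp only [map_sub, rename_X]
    apply sub_ne_zero.mpr
    intro hXeq
    have hmeq : mcol (w j) (w k) x.1 = mcol (w j) (w k) x.2 :=
      MvPolynomial.X_injective hXeq
    by_cases h1 : x.1 = w k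
    · by_cases h2 : x.2 = w k
      · exact (ne_of_lt hx12) (h1.trans h2.symm)
      · rw [h1, mcol_b, mcol_of_ne h2] at hmeq
        rw [h1, ← hmeq] at hx12
        exact absurd (lt_trans hwjk hx12) (lt_irrefl (w j))
    · by_cases h2 : x.2 = w k
      · rw [mcol_of_ne h1, h2, mcol_b] at hmeq
        exact hxne (Prod.ext_iff.mpr ⟨hmeq, h2⟩)
      · rw [mcol_of_ne h1, mcol_of_ne h2] at hmeq
        exact (ne_of_lt hx12) hmeq
  have hP0 : P ≠ 0 := by
    intro h0
    apply hφP
    rw [h0, map_zero]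
  have hmul : (P * g).IsHomogeneous (len w) := hg ▸ hphom
  have hgC : g = C (coeff 0 g) := eq_C_of_mul_homog P g hPhom hP0 hmul
  have hone : (C (coeff 0 g) : Pol n) = 1 := by
    have h1 : rename (mcol (w j) (w k)) (pw w w')
        = rename (mcol (w j) (w k)) P * C (coeff 0 g) := by
      conv_lhs => rw [hg, hgC]
      rw [map_mul, rename_C]
    rw [hedge, htrans] at h1
    have h2 : rename (mcol (w j) (w k)) P * 1
        = rename (mcol (w j) (w k)) P * C (coeff 0 g) := by
      rw [mul_one, ← h1]
    exact (mul_left_cancel₀ hφP h2).symm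
  have hgone : g = 1 := by rw [hgC, hone]
  rw [hsplit, hg, hgone, mul_one]
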